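/- Let n ∈ ℝ³ be a unit vector, x₀ ∈ ℝ³, α⁺, α⁻, β⁺, β⁻ > 0. Define A c = ⟨c, n⟩ n + (α⁺/α⁻)(c − ⟨c, n⟩ n) and B c = (β⁺/β⁻)⟨c, n⟩ n + (c − ⟨c, n⟩ n). Let a⁺, b⁺ ∈ ℝ³ and set a⁻ = A a⁺, b⁻ = B b⁺, and define v^±(x) = a^± × (x − x₀) + b^±, where × is the cross product on ℝ³. Then: (i) v⁺(x) × n = v⁻(x) × n for every x in the plane {x : ⟨x − x₀, n⟩ = 0}; (ii) α⁺ (a⁺ × n) = α⁻ (a⁻ × n) (so the fields α^± curl v^± = 2 α^± a^± have matching tangential traces); and (iii) β⁺ ⟨v⁺(x₀), n⟩ = β⁻ ⟨v⁻(x₀), n⟩. -/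

import Mathlib

open Matrix

private lemma add_cross' (u v w : Fin 3 → ℝ) : (u + v) ⨯₃ w = u ⨯₃ w + v ⨯₃ w := by
  funext i; fin_cases i <;> simp [crossProduct] 

private lemma sub_cross' (u v w : Fin 3 → ℝ) : (u - v) ⨯₃ w = u ⨯₃ w - v ⨯₃ w := by
  funext i; fin_cases i <;> simp [crossProduct] 

private lemma smul_cross' (c : ℝ) (u w : Fin 3 → ℝ) : (c • u) ⨯₃ w = c • (u ⨯₃ w) := by
  funext i; fin_cases i <;> simp [crossProduct] 

private lemma bac_cab (u v w : Fin 3 → ℝ) :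
    (u ⨯₃ v) ⨯₃ w = (u ⬝ᵥ w) • v - (v ⬝ᵥ w) • u := by
  funext i; fin_cases i <;>
    simp [crossProduct, dotProduct, Fin.sum_univ_three] <;> ring_nf

private lemma cross_zero' (u : Fin 3 → ℝ) : u ⨯₃ (0 : Fin 3 → ℝ) = 0 := by
  funext i; fin_cases i <;> simp [crossProduct]

/-- The H(curl) IFE functions of Table 1 satisfy the three approximate interface
jump conditions: with `a⁻ = A a⁺`, `b⁻ = B b⁺` and `v^±(x) = a^± × (x − x₀) + b^±`,
(i) tangential traces of `v^±` match on the plane `⟨x − x₀, n⟩ = 0`;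
(ii) `α⁺ (a⁺ × n) = α⁻ (a⁻ × n)`; (iii) `β⁺ ⟨v⁺(x₀), n⟩ = β⁻ ⟨v⁻(x₀), n⟩`. -/
theorem hcurl_ife_jump_conditions
    (n : Fin 3 → ℝ) (hn : n ⬝ᵥ n = 1) (x0 : Fin 3 → ℝ)
    (αp αm βp βm : ℝ) (hαp : 0 < αp) (hαm : 0 < αm) (hβp : 0 < βp) (hβm : 0 < βm)
    (ap bp am bm : Fin 3 → ℝ)
    (ham : am = (ap ⬝ᵥ n) • n + (αp / αm) • (ap - (ap ⬝ᵥ n) • n))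
    (hbm : bm = (βp / βm) • ((bp ⬝ᵥ n) • n) + (bp - (bp ⬝ᵥ n) • n)) :
    (∀ x : Fin 3 → ℝ, (x - x0) ⬝ᵥ n = 0 →
        (ap ⨯₃ (x - x0) + bp) ⨯₃ n = (am ⨯₃ (x - x0) + bm) ⨯₃ n) ∧
    αp • (ap ⨯₃ n) = αm • (am ⨯₃ n) ∧
    βp * ((ap ⨯₃ (x0 - x0) + bp) ⬝ᵥ n) = βm * ((am ⨯₃ (x0 - x0) + bm) ⬝ᵥ n) := by
  have hamn : am ⬝ᵥ n = ap ⬝ᵥ n := by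
    rw [ham, add_dotProduct, smul_dotProduct, smul_dotProduct, sub_dotProduct,
      smul_dotProduct, hn]
    simp only [smul_eq_mul]
    ring
  have hbmn : bm ⬝ᵥ n = (βp / βm) * (bp ⬝ᵥ n) := by
    rw [hbm, add_dotProduct, smul_dotProduct, smul_dotProduct, sub_dotProduct,
      smul_dotProduct, hn]
    simp only [smul_eq_mul]
    ring
  have hbmcross : bm ⨯₃ n = bp ⨯₃ n := by
    rw [hbm, add_cross', smul_cross', smul_cross', sub_cross', smul_cross', cross_self]
    simp
  refine ⟨?_, ?_, ?_⟩
  · intro x hx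
    rw [add_cross', add_cross', bac_cab, bac_cab, hx, hamn, hbmcross]
    simp
  · rw [ham, add_cross', smul_cross', smul_cross', sub_cross', smul_cross', cross_self]
    simp only [smul_zero, zero_add, sub_zero, smul_smul,
      mul_div_cancel₀ αp hαm.ne']
  · rw [sub_self, cross_zero', cross_zero', zero_add, zero_add, hbmn]
    field_simp
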